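/- Dual (row) orthogonality: for partitions λ, μ ∈ Sh(d,c), (1/n^d) Σ_I S_λ(ζ^I)·conj(S_μ(ζ^I))·|Vand(ζ^I)|^2 = δ_{λ,μ}, where the sum runs over all d-element subsets I of the n-th roots of (-1)^{d+1}. -/

import Mathlib

noncomputable section
open scoped Classical

/-- Complete homogeneous symmetric polynomial of degree `m` in `d` variables. -/
def Hpoly (d m : ℕ) (z : Fin d → ℂ) : ℂ :=
  ∑ α ∈ Finset.Nat.antidiagonalTuple d m, ∏ i, z i ^ α i

/-- `H_k` for integer index `k` (zero for negative `k`). -/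
def HZ (d : ℕ) (z : Fin d → ℂ) (k : ℤ) : ℂ :=
  if 0 ≤ k then Hpoly d k.toNat z else 0

/-- Schur polynomial via the Jacobi–Trudi determinant `det(H_{λ_i - i + j})`. -/
def schur (d : ℕ) (lam : Fin d → ℕ) (z : Fin d → ℂ) : ℂ :=
  Matrix.det (Matrix.of fun i j : Fin d => HZ d z ((lam i : ℤ) + j - i))

/-- The partitions fitting in a `d × c` box, as weakly decreasing functions. -/
def box (d c : ℕ) : Finset (Fin d → Fin (c + 1)) :=
  Finset.univ.filter fun lam => ∀ i j : Fin d, i ≤ j → lam j ≤ lam i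

/-- Poincaré dual partition `PD(λ) = (c - λ_d, …, c - λ_1)`. -/
def PD (d c : ℕ) (lam : Fin d → ℕ) : Fin d → ℕ := fun i => c - lam i.rev

/-- Squared modulus of the Vandermonde determinant of a `d`-tuple. -/
def vandSq (d : ℕ) (z : Fin d → ℂ) : ℝ :=
  ‖∏ k : Fin d, ∏ j ∈ Finset.univ.filter (fun j : Fin d => k < j), (z k - z j)‖ ^ 2

/-- The `d`-tuple of `n`-th roots of `(-1)^{d+1}` selected by a strictly
monotone `K : Fin d → Fin n`: the `k`-th entry is `ε·ζ^{K k}` where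
`ζ = exp(2πi/n)` and `ε = exp(πi(d+1)/n)` is a fixed `n`-th root of `(-1)^{d+1}`. -/
def rootTup (d n : ℕ) (K : Fin d → Fin n) : Fin d → ℂ := fun k =>
  Complex.exp (Real.pi * Complex.I * (d + 1) / n) *
    Complex.exp (2 * Real.pi * Complex.I / n) ^ (K k : ℕ)


def esym {d : ℕ} (z : Fin d → ℂ) (s : Finset (Fin d)) (i : ℕ) : ℂ :=
  ∑ T ∈ s.powersetCard i, ∏ x ∈ T, z x

lemma esym_zero {d : ℕ} (z : Fin d → ℂ) (s : Finset (Fin d)) : esym z s 0 = 1 := by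
  simp [esym]

lemma esym_of_card_lt {d : ℕ} (z : Fin d → ℂ) {s : Finset (Fin d)} {i : ℕ}
    (h : s.card < i) : esym z s i = 0 := by
  simp [esym, Finset.powersetCard_eq_empty.2 h]

lemma esym_insert {d : ℕ} (z : Fin d → ℂ) {k : Fin d} {s : Finset (Fin d)} (hk : k ∉ s)
    (i : ℕ) : esym z (insert k s) (i + 1) = esym z s (i + 1) + z k * esym z s i := by
  unfold esym
  rw [Finset.powersetCard_succ_insert hk, Finset.sum_union, Finset.sum_image, Finset.mul_sum]
  · congr 1
    refine Finset.sum_congr rfl fun T hT => ?_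
    rw [Finset.prod_insert]
    intro hkT
    exact hk (Finset.mem_of_subset (Finset.mem_powersetCard.1 hT).1 hkT)
  · intro T hT U hU hTU
    have hkT : k ∉ T := fun h => hk (Finset.mem_of_subset (Finset.mem_powersetCard.1 hT).1 h)
    have hkU : k ∉ U := fun h => hk (Finset.mem_of_subset (Finset.mem_powersetCard.1 hU).1 h)
    have := congrArg (Finset.erase · k) hTU
    simpa [Finset.erase_insert, hkT, hkU] using this
  · rw [Finset.disjoint_right]
    intro T hT hT'
    obtain ⟨U, hU, rfl⟩ := Finset.mem_image.1 hT
    have hkT : k ∈ insert k U := Finset.mem_insert_self _ _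
    have := (Finset.mem_powersetCard.1 hT').1 hkT
    exact hk this

lemma Hpoly_zero (d : ℕ) (z : Fin d → ℂ) : Hpoly d 0 z = 1 := by
  simp [Hpoly, Finset.Nat.antidiagonalTuple_zero_right]

lemma Hpoly_nil (m : ℕ) (z : Fin 0 → ℂ) : Hpoly 0 (m + 1) z = 0 := by
  simp [Hpoly]

lemma Hrec (d m : ℕ) (z : Fin (d + 1) → ℂ) :
    Hpoly (d + 1) m z = ∑ ab ∈ Finset.HasAntidiagonal.antidiagonal m, z 0 ^ ab.1 * Hpoly d ab.2 (Fin.tail z) := by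
  unfold Hpoly
  simp_rw [Finset.mul_sum]
  rw [Finset.sum_sigma']
  refine (Finset.sum_nbij' (fun p => Fin.cons p.1.1 p.2)
    (fun α : Fin (d+1) → ℕ => ⟨(α 0, ∑ i : Fin d, α i.succ), Fin.tail α⟩) ?_ ?_ ?_ ?_ ?_).symm
  · rintro ⟨⟨a, b⟩, β⟩ hp
    simp only [Finset.mem_sigma, Finset.HasAntidiagonal.mem_antidiagonal,
      Finset.Nat.mem_antidiagonalTuple] at hp ⊢
    rw [Fin.sum_univ_succ]
    simp only [Fin.cons_zero, Fin.cons_succ]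
    rw [hp.2, hp.1]
  · intro α hα
    simp only [Finset.Nat.mem_antidiagonalTuple] at hα
    simp only [Finset.mem_sigma, Finset.HasAntidiagonal.mem_antidiagonal, Finset.Nat.mem_antidiagonalTuple]
    exact ⟨by rw [← hα, Fin.sum_univ_succ], rfl⟩
  · rintro ⟨⟨a, b⟩, β⟩ hp
    simp only [Finset.mem_sigma, Finset.HasAntidiagonal.mem_antidiagonal,
      Finset.Nat.mem_antidiagonalTuple] at hp
    refine Sigma.ext ?_ (heq_of_eq ?_)
    · simp only [Fin.cons_zero, Fin.cons_succ, hp.2]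
    · simp
  · intro α hα
    exact Fin.cons_self_tail α
  · rintro ⟨⟨a, b⟩, β⟩ hp
    rw [Fin.prod_univ_succ]
    simp only [Fin.cons_zero, Fin.cons_succ]
    rfl

lemma HZ_neg (d : ℕ) (z : Fin d → ℂ) {N : ℤ} (h : N < 0) : HZ d z N = 0 := by
  simp [HZ, not_le.2 h]

lemma HZ_zero (d : ℕ) (z : Fin d → ℂ) : HZ d z 0 = 1 := by
  simp [HZ, Hpoly_zero]

lemma HZ_rec (d : ℕ) (z : Fin (d + 1) → ℂ) (N : ℤ) :
    HZ (d + 1) z N = z 0 * HZ (d + 1) z (N - 1) + HZ d (Fin.tail z) N := by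
  rcases lt_trichotomy N 0 with h | h | h
  · rw [HZ_neg _ _ h, HZ_neg _ _ (by omega), HZ_neg _ _ h]
    ring
  · subst h
    rw [HZ_zero, HZ_zero, HZ_neg _ _ (by norm_num)]
    ring
  · obtain ⟨m, rfl⟩ : ∃ m : ℕ, N = (m : ℤ) + 1 := ⟨(N - 1).toNat, by omega⟩
    have h1 : HZ (d + 1) z ((m : ℤ) + 1) = Hpoly (d + 1) (m + 1) z := by
      have hh : ((m : ℤ) + 1).toNat = m + 1 := by omega
      rw [HZ, if_pos (by omega), hh]
    have h2 : HZ (d + 1) z ((m : ℤ) + 1 - 1) = Hpoly (d + 1) m z := by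
      have hh : ((m : ℤ) + 1 - 1).toNat = m := by omega
      rw [HZ, if_pos (by omega), hh]
    have h3 : HZ d (Fin.tail z) ((m : ℤ) + 1) = Hpoly d (m + 1) (Fin.tail z) := by
      have hh : ((m : ℤ) + 1).toNat = m + 1 := by omega
      rw [HZ, if_pos (by omega), hh]
    rw [h1, h2, h3, Hrec d (m + 1) z, Hrec d m z, Finset.Nat.antidiagonal_succ,
      Finset.sum_cons, Finset.sum_map]
    simp only [Function.Embedding.prodMap, Function.Embedding.coeFn_mk,
      Function.Embedding.refl_apply, Prod.map]
    rw [Finset.mul_sum]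
    rw [pow_zero, one_mul, add_comm]
    congr 1
    refine Finset.sum_congr rfl fun ab _ => ?_
    rw [pow_succ]
    ring

lemma esym_tail (d : ℕ) (z : Fin (d + 1) → ℂ) (i : ℕ) :
    esym z (Finset.univ.erase 0) i = esym (Fin.tail z) Finset.univ i := by
  have he : (Finset.univ.erase (0 : Fin (d + 1))) = Finset.univ.map (Fin.succEmb d) := by
    ext x
    simp only [Finset.mem_erase, Finset.mem_univ, and_true, Finset.mem_map, true_and]
    constructor
    · intro hx
      exact ⟨x.pred hx, by simp⟩
    · rintro ⟨y, -, rfl⟩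
      simp [Fin.succ_ne_zero]
  rw [he]
  unfold esym
  rw [Finset.powersetCard_map, Finset.sum_map]
  refine Finset.sum_congr rfl fun T _ => ?_
  simp only [RelEmbedding.coe_toEmbedding, Finset.mapEmbedding_apply]
  rw [Finset.prod_map]
  rfl

lemma esym_univ_succ (d : ℕ) (z : Fin (d + 1) → ℂ) (i : ℕ) :
    esym z Finset.univ (i + 1) =
      esym (Fin.tail z) Finset.univ (i + 1) + z 0 * esym (Fin.tail z) Finset.univ i := by
  have h0 : (Finset.univ : Finset (Fin (d + 1))) = insert 0 (Finset.univ.erase 0) := by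
    rw [Finset.insert_erase (Finset.mem_univ _)]
  rw [h0, esym_insert z (Finset.notMem_erase _ _), esym_tail, esym_tail]

lemma FULL (d : ℕ) (z : Fin d → ℂ) (N : ℤ) :
    ∑ i ∈ Finset.range (d + 1), (-1 : ℂ) ^ i * esym z Finset.univ i * HZ d z (N - i) =
      if N = 0 then 1 else 0 := by
  induction d generalizing N with
  | zero =>
    rw [Finset.sum_range_one]
    simp only [pow_zero, one_mul, esym_zero, Nat.cast_zero, sub_zero]
    rw [HZ]
    rcases lt_trichotomy N 0 with h | h | h
    · rw [if_neg (by omega), if_neg (by omega)]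
    · subst h; simp [Hpoly_zero]
    · rw [if_pos (by omega), if_neg (by omega)]
      obtain ⟨m, hm⟩ : ∃ m : ℕ, N.toNat = m + 1 := ⟨N.toNat - 1, by omega⟩
      rw [hm, Hpoly]
      simp
  | succ d ih =>
    have hA : ∀ M : ℤ, (∑ i ∈ Finset.range (d + 1),
        (-1 : ℂ) ^ i * esym (Fin.tail z) Finset.univ i * HZ (d + 1) z (M - i)) =
        z 0 * (∑ i ∈ Finset.range (d + 1),
        (-1 : ℂ) ^ i * esym (Fin.tail z) Finset.univ i * HZ (d + 1) z (M - 1 - i)) +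
        (if M = 0 then 1 else 0) := by
      intro M
      rw [← ih (Fin.tail z) M, Finset.mul_sum, ← Finset.sum_add_distrib]
      refine Finset.sum_congr rfl fun i _ => ?_
      rw [HZ_rec d z (M - i)]
      have hh : M - i - 1 = M - 1 - i := by ring
      rw [hh]
      ring
    have hEd : esym (Fin.tail z) Finset.univ (d + 1) = 0 :=
      esym_of_card_lt (Fin.tail z) (by simp)
    have peel : (∑ i ∈ Finset.range (d + 1),
          (-1 : ℂ) ^ (i + 1) * esym (Fin.tail z) Finset.univ (i + 1) *
            HZ (d + 1) z (N - ((i + 1 : ℕ) : ℤ))) =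
        (∑ i ∈ Finset.range (d + 1),
          (-1 : ℂ) ^ i * esym (Fin.tail z) Finset.univ i * HZ (d + 1) z (N - i)) -
          HZ (d + 1) z N := by
      have h1 := Finset.sum_range_succ'
        (fun i => (-1 : ℂ) ^ i * esym (Fin.tail z) Finset.univ i * HZ (d + 1) z (N - i)) (d + 1)
      have h2 := Finset.sum_range_succ
        (fun i => (-1 : ℂ) ^ i * esym (Fin.tail z) Finset.univ i * HZ (d + 1) z (N - i)) (d + 1)
      rw [hEd] at h2
      simp only [pow_zero, one_mul, esym_zero, Nat.cast_zero, sub_zero, mul_zero, zero_mul,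
        add_zero] at h1 h2
      rw [h2] at h1
      linear_combination -h1
    rw [Finset.sum_range_succ']
    have hsplit : ∀ i : ℕ,
        (-1 : ℂ) ^ (i + 1) * esym z Finset.univ (i + 1) * HZ (d + 1) z (N - ((i + 1 : ℕ) : ℤ)) =
        (-1 : ℂ) ^ (i + 1) * esym (Fin.tail z) Finset.univ (i + 1) *
            HZ (d + 1) z (N - ((i + 1 : ℕ) : ℤ)) -
          z 0 * ((-1 : ℂ) ^ i * esym (Fin.tail z) Finset.univ i * HZ (d + 1) z (N - 1 - i)) := by
      intro i
      rw [esym_univ_succ]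
      have hh : N - ((i + 1 : ℕ) : ℤ) = N - 1 - i := by push_cast; ring
      rw [hh]
      ring
    simp only [hsplit]
    rw [Finset.sum_sub_distrib, peel, ← Finset.mul_sum, hA N]
    simp only [pow_zero, one_mul, esym_zero, Nat.cast_zero, sub_zero]
    ring

lemma KEY (d : ℕ) (z : Fin d → ℂ) (k : Fin d) (N : ℤ) :
    ∑ j ∈ Finset.range d, (-1 : ℂ) ^ j * esym z (Finset.univ.erase k) j * HZ d z (N - j) =
      if 0 ≤ N then z k ^ N.toNat else 0 := by
  rcases Nat.eq_zero_or_pos d with rfl | hd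
  · exact k.elim0
  have hcard : (Finset.univ.erase k).card = d - 1 := by
    rw [Finset.card_erase_of_mem (Finset.mem_univ _), Finset.card_univ, Fintype.card_fin]
  have hEd : esym z (Finset.univ.erase k) d = 0 :=
    esym_of_card_lt z (by omega)
  have hneg : ∀ M : ℤ, M < 0 →
      (∑ j ∈ Finset.range d, (-1 : ℂ) ^ j * esym z (Finset.univ.erase k) j * HZ d z (M - j)) = 0 := by
    intro M hM
    refine Finset.sum_eq_zero fun j _ => ?_
    rw [HZ_neg _ _ (by omega)]
    ring
  have main : ∀ M : ℤ,
      (∑ j ∈ Finset.range d, (-1 : ℂ) ^ j * esym z (Finset.univ.erase k) j * HZ d z (M - j)) =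
      z k * (∑ j ∈ Finset.range d,
        (-1 : ℂ) ^ j * esym z (Finset.univ.erase k) j * HZ d z (M - 1 - j)) +
      (if M = 0 then 1 else 0) := by
    intro M
    have peel : (∑ i ∈ Finset.range d,
          (-1 : ℂ) ^ (i + 1) * esym z (Finset.univ.erase k) (i + 1) *
            HZ d z (M - ((i + 1 : ℕ) : ℤ))) =
        (∑ j ∈ Finset.range d,
          (-1 : ℂ) ^ j * esym z (Finset.univ.erase k) j * HZ d z (M - j)) - HZ d z M := by
      have h1 := Finset.sum_range_succ'
        (fun j => (-1 : ℂ) ^ j * esym z (Finset.univ.erase k) j * HZ d z (M - j)) d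
      have h2 := Finset.sum_range_succ
        (fun j => (-1 : ℂ) ^ j * esym z (Finset.univ.erase k) j * HZ d z (M - j)) d
      rw [hEd] at h2
      simp only [pow_zero, one_mul, esym_zero, Nat.cast_zero, sub_zero, mul_zero, zero_mul,
        add_zero] at h1 h2
      rw [h2] at h1
      linear_combination -h1
    have hsplit : ∀ i : ℕ,
        (-1 : ℂ) ^ (i + 1) * esym z Finset.univ (i + 1) * HZ d z (M - ((i + 1 : ℕ) : ℤ)) =
        (-1 : ℂ) ^ (i + 1) * esym z (Finset.univ.erase k) (i + 1) *
            HZ d z (M - ((i + 1 : ℕ) : ℤ)) -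
          z k * ((-1 : ℂ) ^ i * esym z (Finset.univ.erase k) i * HZ d z (M - 1 - i)) := by
      intro i
      have h0 : esym z Finset.univ (i + 1) =
          esym z (Finset.univ.erase k) (i + 1) + z k * esym z (Finset.univ.erase k) i := by
        conv_lhs => rw [show (Finset.univ : Finset (Fin d)) = insert k (Finset.univ.erase k)
          from (Finset.insert_erase (Finset.mem_univ _)).symm]
        rw [esym_insert z (Finset.notMem_erase _ _)]
      have hh : M - ((i + 1 : ℕ) : ℤ) = M - 1 - i := by push_cast; ring
      rw [h0, hh]
      ring
    have trans : (∑ i ∈ Finset.range (d + 1),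
        (-1 : ℂ) ^ i * esym z Finset.univ i * HZ d z (M - i)) =
        (∑ j ∈ Finset.range d,
          (-1 : ℂ) ^ j * esym z (Finset.univ.erase k) j * HZ d z (M - j)) -
        z k * (∑ j ∈ Finset.range d,
          (-1 : ℂ) ^ j * esym z (Finset.univ.erase k) j * HZ d z (M - 1 - j)) := by
      rw [Finset.sum_range_succ']
      simp only [hsplit]
      rw [Finset.sum_sub_distrib, ← Finset.mul_sum, peel]
      simp only [pow_zero, one_mul, esym_zero, Nat.cast_zero, sub_zero]
      ring
    have := FULL d z M
    rw [trans] at this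
    linear_combination this
  have pos : ∀ m : ℕ,
      (∑ j ∈ Finset.range d, (-1 : ℂ) ^ j * esym z (Finset.univ.erase k) j *
        HZ d z ((m : ℤ) - j)) = z k ^ m := by
    intro m
    induction m with
    | zero =>
      simp only [Nat.cast_zero]
      rw [main 0, show (0:ℤ) - 1 = -1 by norm_num, hneg (-1) (by norm_num)]
      norm_num
    | succ m ihm =>
      have h1 := main ((m : ℤ) + 1)
      rw [if_neg (by omega)] at h1
      have h2 : (m : ℤ) + 1 - 1 = (m : ℤ) := by ring
      rw [h2, ihm] at h1
      push_cast
      rw [h1, pow_succ]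
      ring
  rcases le_or_gt 0 N with h | h
  · rw [if_pos h]
    have : N = ((N.toNat : ℕ) : ℤ) := by omega
    rw [this]
    exact pos N.toNat
  · rw [if_neg (by omega), hneg N h]

def Amat (d : ℕ) (z : Fin d → ℂ) (lam : Fin d → ℕ) : Matrix (Fin d) (Fin d) ℂ :=
  Matrix.of fun i k : Fin d => z k ^ (lam i + (d - 1 - (i : ℕ)))

def Emat (d : ℕ) (z : Fin d → ℂ) : Matrix (Fin d) (Fin d) ℂ :=
  Matrix.of fun j k : Fin d =>
    (-1 : ℂ) ^ (d - 1 - (j : ℕ)) * esym z (Finset.univ.erase k) (d - 1 - (j : ℕ))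

lemma alternant (d : ℕ) (z : Fin d → ℂ) (lam : Fin d → ℕ) :
    Amat d z lam = (Matrix.of fun i j : Fin d => HZ d z ((lam i : ℤ) + j - i)) * Emat d z := by
  ext i k
  rw [Matrix.mul_apply]
  have hrev : ∀ j : Fin d, (Matrix.of fun i j : Fin d => HZ d z ((lam i : ℤ) + j - i)) i
        (Fin.rev j) * Emat d z (Fin.rev j) k =
      (-1 : ℂ) ^ (j : ℕ) * esym z (Finset.univ.erase k) (j : ℕ) *
        HZ d z (((lam i + (d - 1 - (i : ℕ)) : ℕ) : ℤ) - (j : ℕ)) := by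
    intro j
    have hv : ((Fin.rev j : Fin d) : ℕ) = d - 1 - (j : ℕ) := by
      rw [Fin.val_rev]
      omega
    simp only [Emat, Matrix.of_apply, hv]
    have h1 : d - 1 - (d - 1 - (j : ℕ)) = (j : ℕ) := by
      have := j.isLt
      omega
    rw [h1]
    have h2 : ((lam i : ℤ) + ((d - 1 - (j : ℕ) : ℕ) : ℤ) - (i : ℕ)) =
        (((lam i + (d - 1 - (i : ℕ)) : ℕ) : ℤ) - (j : ℕ)) := by
      have hi := i.isLt
      have hj := j.isLt
      push_cast
      omega
    rw [h2]
    ring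
  calc Amat d z lam i k = z k ^ (lam i + (d - 1 - (i : ℕ))) := rfl
    _ = ∑ j ∈ Finset.range d, (-1 : ℂ) ^ j * esym z (Finset.univ.erase k) j *
          HZ d z (((lam i + (d - 1 - (i : ℕ)) : ℕ) : ℤ) - j) := by
        rw [KEY d z k]
        rw [if_pos (Int.natCast_nonneg _)]
        congr 1
    _ = ∑ j : Fin d, (-1 : ℂ) ^ (j : ℕ) * esym z (Finset.univ.erase k) (j : ℕ) *
          HZ d z (((lam i + (d - 1 - (i : ℕ)) : ℕ) : ℤ) - (j : ℕ)) := by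
        rw [Finset.sum_range fun j => (-1 : ℂ) ^ j * esym z (Finset.univ.erase k) j *
          HZ d z (((lam i + (d - 1 - (i : ℕ)) : ℕ) : ℤ) - j)]
    _ = ∑ j : Fin d, (Matrix.of fun i j : Fin d => HZ d z ((lam i : ℤ) + j - i)) i
          (Fin.rev j) * Emat d z (Fin.rev j) k := by
        exact (Finset.sum_congr rfl fun j _ => (hrev j)).symm
    _ = ∑ j : Fin d, (Matrix.of fun i j : Fin d => HZ d z ((lam i : ℤ) + j - i)) i j *
          Emat d z j k := by
        exact Fintype.sum_equiv Fin.revPerm _ _ fun j => rfl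

lemma det_Amat (d : ℕ) (z : Fin d → ℂ) (lam : Fin d → ℕ) :
    (Amat d z lam).det = schur d lam z * (Emat d z).det := by
  rw [alternant, Matrix.det_mul]
  rfl

lemma schur_zero (d : ℕ) (z : Fin d → ℂ) : schur d (fun _ => 0) z = 1 := by
  unfold schur
  rw [Matrix.det_of_upperTriangular]
  · refine Finset.prod_eq_one fun i _ => ?_
    simp only [Matrix.of_apply, Nat.cast_zero]
    rw [show ((0 : ℤ) + i - i) = 0 by ring, HZ_zero]
  · intro i j hij
    simp only [Matrix.of_apply, Nat.cast_zero]
    rw [HZ_neg]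
    have hji : (j : ℕ) < (i : ℕ) := hij
    omega

lemma det_Emat_eq (d : ℕ) (z : Fin d → ℂ) :
    (Emat d z).det = (Amat d z (fun _ => 0)).det := by
  rw [det_Amat, schur_zero, one_mul]

lemma abs_det_Amat_zero (d : ℕ) (z : Fin d → ℂ) :
    ‖(Amat d z (fun _ => 0)).det‖ =
      ‖∏ k : Fin d, ∏ j ∈ Finset.univ.filter (fun j : Fin d => k < j), (z k - z j)‖ := by
  have hA : Amat d z (fun _ => 0) = ((Matrix.vandermonde z).submatrix id Fin.revPerm).transpose := by
    ext i k
    simp only [Amat, Matrix.of_apply, Matrix.transpose_apply, Matrix.submatrix_apply,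
      Matrix.vandermonde_apply, id_eq]
    congr 1
    show 0 + (d - 1 - (i : ℕ)) = (Fin.rev i : ℕ)
    rw [Fin.val_rev]
    omega
  rw [hA, Matrix.det_transpose, Matrix.det_permute', Matrix.det_vandermonde]
  rw [norm_mul]
  have hsign : ‖((Equiv.Perm.sign (Fin.revPerm : Equiv.Perm (Fin d)) : ℤ) : ℂ)‖ = 1 := by
    rcases Int.units_eq_one_or (Equiv.Perm.sign (Fin.revPerm : Equiv.Perm (Fin d))) with h | h <;>
      simp [h]
  rw [hsign, one_mul]
  rw [norm_prod, norm_prod]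
  refine Finset.prod_congr rfl fun i _ => ?_
  have : Finset.univ.filter (fun j : Fin d => i < j) = Finset.Ioi i := by
    ext x
    simp [Finset.mem_Ioi]
  rw [this, norm_prod, norm_prod]
  refine Finset.prod_congr rfl fun j _ => ?_
  exact norm_sub_rev _ _

lemma summand_eq (d : ℕ) (z : Fin d → ℂ) (lam mu : Fin d → ℕ) :
    schur d lam z * (starRingEnd ℂ) (schur d mu z) * ((vandSq d z : ℝ) : ℂ) =
      (Amat d z lam).det * (starRingEnd ℂ) (Amat d z mu).det := by
  have hE : (Amat d z (fun _ => 0)).det * (starRingEnd ℂ) (Amat d z (fun _ => 0)).det =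
      ((vandSq d z : ℝ) : ℂ) := by
    rw [Complex.mul_conj, ← Complex.sq_norm, abs_det_Amat_zero]
    rfl
  rw [det_Amat, det_Amat, det_Emat_eq, map_mul, ← hE]
  ring

lemma strictMono_eq_of_image_eq {d : ℕ} {α : Type*} [LinearOrder α] {f g : Fin d → α}
    (hf : StrictMono f) (hg : StrictMono g)
    (h : Finset.univ.image f = Finset.univ.image g) : f = g := by
  have hc : (Finset.univ.image f).card = d := by
    rw [Finset.card_image_of_injective _ hf.injective, Finset.card_univ, Fintype.card_fin]
  have hc2 : (Finset.univ.image g).card = d := by rw [← h]; exact hc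
  have h1 := Finset.orderEmbOfFin_unique hc
    (fun x => Finset.mem_image_of_mem f (Finset.mem_univ x)) hf
  have h2 := Finset.orderEmbOfFin_unique hc2
    (fun x => Finset.mem_image_of_mem g (Finset.mem_univ x)) hg
  have hee : ((Finset.univ.image f).orderEmbOfFin hc : Fin d ↪o α) =
      (Finset.univ.image g).orderEmbOfFin hc2 := by
    revert hc
    rw [h]
    exact fun _ _ => rfl
  funext x
  exact (congrFun h1 x).trans (by rw [hee]; exact (congrFun h2 x).symm)

lemma det_expand {d : ℕ} (M : Matrix (Fin d) (Fin d) ℂ) :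
    M.det = ∑ σ : Equiv.Perm (Fin d), ((Equiv.Perm.sign σ : ℤ) : ℂ) * ∏ i, M (σ i) i := by
  rw [Matrix.det_apply]
  refine Finset.sum_congr rfl fun σ _ => ?_
  rw [Units.smul_def, zsmul_eq_mul]

lemma charSum (n : ℕ) (hn : 0 < n) (ε : ℂ) (hε : ε * (starRingEnd ℂ) ε = 1)
    (a b : ℕ) (ha : a < n) (hb : b < n) :
    (∑ t : Fin n, (ε * Complex.exp (2 * Real.pi * Complex.I / n) ^ (t : ℕ)) ^ a *
      ((starRingEnd ℂ) (ε * Complex.exp (2 * Real.pi * Complex.I / n) ^ (t : ℕ))) ^ b) =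
      if a = b then (n : ℂ) else 0 := by
  set θ : ℂ := 2 * Real.pi * Complex.I / n with hθ
  set ζ : ℂ := Complex.exp θ with hζ
  have hconj : (starRingEnd ℂ) ζ = Complex.exp (-θ) := by
    rw [hζ, ← Complex.exp_conj]
    congr 1
    rw [hθ]
    simp [map_div₀, Complex.conj_I, map_ofNat]
    ring
  have huv : ∀ t : Fin n, (ε * ζ ^ (t : ℕ)) ^ a * ((starRingEnd ℂ) (ε * ζ ^ (t : ℕ))) ^ b =
      (ε ^ a * ((starRingEnd ℂ) ε) ^ b) * ((ζ ^ a * ((starRingEnd ℂ) ζ) ^ b) ^ (t : ℕ)) := by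
    intro t
    rw [map_mul, map_pow]
    rw [mul_pow, mul_pow, mul_pow]
    rw [← pow_mul ζ, ← pow_mul ζ, mul_comm (t:ℕ) a, pow_mul ζ,
      ← pow_mul ((starRingEnd ℂ) ζ), mul_comm (t:ℕ) b, pow_mul ((starRingEnd ℂ) ζ)]
    ring
  simp_rw [huv]
  rw [← Finset.mul_sum]
  rcases eq_or_ne a b with rfl | hab
  · rw [if_pos rfl]
    have h1 : ζ ^ a * ((starRingEnd ℂ) ζ) ^ a = 1 := by
      rw [← mul_pow, Complex.mul_conj]
      have : Complex.normSq ζ = 1 := by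
        have habs : ‖ζ‖ = 1 := by
          rw [hζ, Complex.norm_exp]
          have : θ.re = 0 := by
            rw [hθ]
            simp [Complex.div_re]
          rw [this, Real.exp_zero]
        rw [← Complex.sq_norm, habs]
        norm_num
      rw [this]
      norm_num
    have h2 : ε ^ a * ((starRingEnd ℂ) ε) ^ a = 1 := by
      rw [← mul_pow, hε, one_pow]
    rw [h1, h2, one_mul]
    simp
  · rw [if_neg hab]
    have hn' : (n : ℂ) ≠ 0 := by
      exact_mod_cast Nat.cast_ne_zero.2 (by omega)
    have hu : ζ ^ a * ((starRingEnd ℂ) ζ) ^ b = Complex.exp (((a : ℂ) - b) * θ) := by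
      rw [hconj, hζ, ← Complex.exp_nat_mul, ← Complex.exp_nat_mul, ← Complex.exp_add]
      congr 1
      ring
    have hune : ζ ^ a * ((starRingEnd ℂ) ζ) ^ b ≠ 1 := by
      rw [hu]
      intro hcon
      obtain ⟨m, hm⟩ := Complex.exp_eq_one_iff.1 hcon
      rw [hθ] at hm
      have h2pi : (2 : ℂ) * Real.pi * Complex.I ≠ 0 := by
        simp [Complex.I_ne_zero, Real.pi_ne_zero, Complex.ofReal_ne_zero]
      have hmain : ((a : ℂ) - b) = m * n := by
        field_simp at hm
        linear_combination hm
      have hint : ((a : ℤ) - b) = m * n := by exact_mod_cast hmain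
      have han : (a : ℤ) < n := by exact_mod_cast ha
      have hbn : (b : ℤ) < n := by exact_mod_cast hb
      have habz : (a : ℤ) ≠ b := by exact_mod_cast hab
      have hn1z : (1 : ℤ) ≤ n := by exact_mod_cast hn
      have haz : (0 : ℤ) ≤ a := Int.natCast_nonneg a
      have hbz : (0 : ℤ) ≤ b := Int.natCast_nonneg b
      rcases lt_trichotomy m 0 with hm0 | rfl | hm0
      · nlinarith
      · simp at hint
        omega
      · nlinarith
    have hun : (ζ ^ a * ((starRingEnd ℂ) ζ) ^ b) ^ n = 1 := by
      have hζn : ζ ^ n = 1 := by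
        rw [hζ, ← Complex.exp_nat_mul]
        have : (n : ℂ) * θ = 2 * Real.pi * Complex.I := by
          rw [hθ, mul_div_assoc']
          exact mul_div_cancel_left₀ _ hn'
        rw [this, Complex.exp_two_pi_mul_I]
      have hcζn : ((starRingEnd ℂ) ζ) ^ n = 1 := by
        rw [← map_pow, hζn, map_one]
      rw [mul_pow, ← pow_mul, ← pow_mul, mul_comm a n, mul_comm b n, pow_mul, pow_mul,
        hζn, hcζn]
      norm_num
    rw [Fin.sum_univ_eq_sum_range (fun t => (ζ ^ a * ((starRingEnd ℂ) ζ) ^ b) ^ t) n]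
    rw [geom_sum_eq hune n, hun]
    norm_num

lemma prod_ite_all {d : ℕ} (n : ℂ) (P : Fin d → Prop) [DecidablePred P] :
    (∏ k : Fin d, if P k then n else 0) = if (∀ k, P k) then n ^ d else 0 := by
  by_cases hall : ∀ k, P k
  · rw [if_pos hall]
    rw [Finset.prod_congr rfl fun k _ => if_pos (hall k), Finset.prod_const,
      Finset.card_univ, Fintype.card_fin]
  · rw [if_neg hall]
    push_neg at hall
    obtain ⟨k0, hk0⟩ := hall
    exact Finset.prod_eq_zero (Finset.mem_univ k0) (if_neg hk0)

lemma grand (d n : ℕ) (hn : 0 < n) (w : Fin n → ℂ) (e f : Fin d → ℕ)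
    (hw : ∀ a b : ℕ, a < n → b < n →
      (∑ t : Fin n, w t ^ a * ((starRingEnd ℂ) (w t)) ^ b) = if a = b then (n : ℂ) else 0)
    (he : ∀ i, e i < n) (hf : ∀ i, f i < n)
    (hse : StrictMono (e ∘ Fin.rev)) (hsf : StrictMono (f ∘ Fin.rev)) :
    (∑ K : Fin d → Fin n,
      (Matrix.of fun i k : Fin d => w (K k) ^ e i).det *
        (starRingEnd ℂ) (Matrix.of fun i k : Fin d => w (K k) ^ f i).det) =
    if e = f then ((Nat.factorial d : ℕ) : ℂ) * (n : ℂ) ^ d else 0 := by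
  have einj : Function.Injective e := by
    intro i j hij
    have := hse.injective (a₁ := Fin.rev i) (a₂ := Fin.rev j) (by simpa using hij)
    simpa [Fin.rev_inj] using this
  have step1 : ∀ K : Fin d → Fin n,
      (Matrix.of fun i k : Fin d => w (K k) ^ e i).det *
        (starRingEnd ℂ) (Matrix.of fun i k : Fin d => w (K k) ^ f i).det =
      ∑ σ : Equiv.Perm (Fin d), ∑ τ : Equiv.Perm (Fin d),
        ((Equiv.Perm.sign σ : ℤ) : ℂ) * ((Equiv.Perm.sign τ : ℤ) : ℂ) *
          ∏ k : Fin d, (w (K k) ^ e (σ k) * ((starRingEnd ℂ) (w (K k))) ^ f (τ k)) := by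
    intro K
    rw [det_expand, det_expand, map_sum, Finset.sum_mul_sum]
    refine Finset.sum_congr rfl fun σ _ => Finset.sum_congr rfl fun τ _ => ?_
    rw [map_mul, map_prod]
    simp only [Matrix.of_apply, map_pow, map_intCast]
    rw [Finset.prod_mul_distrib]
    ring
  simp_rw [step1]
  rw [Finset.sum_comm]
  have swap2 : ∀ σ : Equiv.Perm (Fin d),
      (∑ K : Fin d → Fin n, ∑ τ : Equiv.Perm (Fin d),
        ((Equiv.Perm.sign σ : ℤ) : ℂ) * ((Equiv.Perm.sign τ : ℤ) : ℂ) *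
          ∏ k : Fin d, (w (K k) ^ e (σ k) * ((starRingEnd ℂ) (w (K k))) ^ f (τ k))) =
      ∑ τ : Equiv.Perm (Fin d),
        ((Equiv.Perm.sign σ : ℤ) : ℂ) * ((Equiv.Perm.sign τ : ℤ) : ℂ) *
          (if ∀ k, e (σ k) = f (τ k) then (n : ℂ) ^ d else 0) := by
    intro σ
    rw [Finset.sum_comm]
    refine Finset.sum_congr rfl fun τ _ => ?_
    rw [← Finset.mul_sum]
    congr 1
    have hps : (∑ K : Fin d → Fin n,
        ∏ k : Fin d, (w (K k) ^ e (σ k) * ((starRingEnd ℂ) (w (K k))) ^ f (τ k))) =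
        ∏ k : Fin d, ∑ t : Fin n, (w t ^ e (σ k) * ((starRingEnd ℂ) (w t)) ^ f (τ k)) :=
      (Fintype.prod_sum fun k t => w t ^ e (σ k) * ((starRingEnd ℂ) (w t)) ^ f (τ k)).symm
    rw [hps]
    rw [Finset.prod_congr rfl fun k _ => hw (e (σ k)) (f (τ k)) (he _) (hf _)]
    exact prod_ite_all (n : ℂ) _
  simp_rw [swap2]
  by_cases hef : e = f
  · subst hef
    rw [if_pos rfl]
    have hcond : ∀ σ τ : Equiv.Perm (Fin d), (∀ k, e (σ k) = e (τ k)) ↔ σ = τ := by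
      intro σ τ
      constructor
      · intro h
        ext k
        exact congrArg Fin.val (einj (h k))
      · rintro rfl k
        rfl
    have hterm : ∀ σ : Equiv.Perm (Fin d),
        (∑ τ : Equiv.Perm (Fin d),
          ((Equiv.Perm.sign σ : ℤ) : ℂ) * ((Equiv.Perm.sign τ : ℤ) : ℂ) *
            (if ∀ k, e (σ k) = e (τ k) then (n : ℂ) ^ d else 0)) = (n : ℂ) ^ d := by
      intro σ
      rw [Finset.sum_eq_single σ]
      · rw [if_pos (fun k => rfl)]
        have : ((Equiv.Perm.sign σ : ℤ) : ℂ) * ((Equiv.Perm.sign σ : ℤ) : ℂ) = 1 := by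
          rcases Int.units_eq_one_or (Equiv.Perm.sign σ) with h | h <;> rw [h] <;> norm_num
        rw [this, one_mul]
      · intro τ _ hτ
        rw [if_neg, mul_zero]
        rw [hcond]
        exact fun h => hτ h.symm
      · intro h
        exact absurd (Finset.mem_univ σ) h
    rw [Finset.sum_congr rfl fun σ _ => hterm σ, Finset.sum_const, Finset.card_univ,
      Fintype.card_perm, Fintype.card_fin, nsmul_eq_mul]
  · rw [if_neg hef]
    refine Finset.sum_eq_zero fun σ _ => Finset.sum_eq_zero fun τ _ => ?_
    rw [if_neg, mul_zero]
    intro hall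
    apply hef
    have himg : Finset.univ.image e = Finset.univ.image f := by
      ext x
      simp only [Finset.mem_image, Finset.mem_univ, true_and]
      constructor
      · rintro ⟨i, rfl⟩
        exact ⟨τ (σ⁻¹ i), by rw [← hall (σ⁻¹ i)]; simp⟩
      · rintro ⟨i, rfl⟩
        exact ⟨σ (τ⁻¹ i), by rw [hall (τ⁻¹ i)]; simp⟩
    have himg2 : Finset.univ.image (e ∘ Fin.rev) = Finset.univ.image (f ∘ Fin.rev) := by
      have h1 : Finset.univ.image (e ∘ Fin.rev) = Finset.univ.image e := by
        rw [← Finset.image_image]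
        congr 1
        exact Finset.image_univ_equiv Fin.revPerm
      have h2 : Finset.univ.image (f ∘ Fin.rev) = Finset.univ.image f := by
        rw [← Finset.image_image]
        congr 1
        exact Finset.image_univ_equiv Fin.revPerm
      rw [h1, h2, himg]
    have := strictMono_eq_of_image_eq hse hsf himg2
    funext i
    have hi := congrFun this (Fin.rev i)
    simpa using hi

lemma sum_all_eq (d n : ℕ) (G : (Fin d → Fin n) → ℂ)
    (hperm : ∀ (K : Fin d → Fin n) (σ : Equiv.Perm (Fin d)), G (K ∘ σ) = G K)
    (hzero : ∀ K : Fin d → Fin n, ¬ Function.Injective K → G K = 0) :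
    (∑ K : Fin d → Fin n, G K) =
      ((Nat.factorial d : ℕ) : ℂ) *
        ∑ K ∈ Finset.univ.filter (fun K : Fin d → Fin n => StrictMono K), G K := by
  have step1 : (∑ K : Fin d → Fin n, G K) =
      ∑ K ∈ Finset.univ.filter (fun K : Fin d → Fin n => Function.Injective K), G K := by
    refine (Finset.sum_subset (Finset.filter_subset _ _) fun K _ hK => ?_).symm
    refine hzero K ?_
    simpa using hK
  rw [step1]
  have step2 : (∑ p ∈ (Finset.univ.filter (fun K : Fin d → Fin n => StrictMono K)) ×ˢ
        (Finset.univ : Finset (Equiv.Perm (Fin d))), G p.1) =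
      ∑ K ∈ Finset.univ.filter (fun K : Fin d → Fin n => Function.Injective K), G K := by
    refine Finset.sum_nbij' (fun p => p.1 ∘ p.2)
      (fun K => (K ∘ Tuple.sort K, (Tuple.sort K)⁻¹)) ?_ ?_ ?_ ?_ ?_
    · rintro ⟨L, σ⟩ hp
      simp only [Finset.mem_product, Finset.mem_filter, Finset.mem_univ, true_and] at hp ⊢
      exact hp.1.injective.comp σ.injective
    · intro K hK
      simp only [Finset.mem_filter, Finset.mem_univ, true_and] at hK
      simp only [Finset.mem_product, Finset.mem_filter, Finset.mem_univ, true_and, and_true]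
      exact (Tuple.monotone_sort K).strictMono_of_injective (hK.comp (Tuple.sort K).injective)
    · rintro ⟨L, σ⟩ hp
      simp only [Finset.mem_product, Finset.mem_filter, Finset.mem_univ, true_and,
        and_true] at hp
      have hLinj : Function.Injective L := hp.injective
      have hsorted : (L ∘ σ) ∘ Tuple.sort (L ∘ σ) = L := by
        refine strictMono_eq_of_image_eq
          ((Tuple.monotone_sort (L ∘ σ)).strictMono_of_injective
            ((hLinj.comp σ.injective).comp (Tuple.sort (L ∘ σ)).injective)) hp ?_
        ext x
        simp only [Finset.mem_image, Finset.mem_univ, true_and, Function.comp_apply]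
        constructor
        · rintro ⟨i, rfl⟩
          exact ⟨σ (Tuple.sort (L ∘ σ) i), rfl⟩
        · rintro ⟨i, rfl⟩
          exact ⟨(Tuple.sort (L ∘ σ))⁻¹ (σ⁻¹ i), by simp⟩
      have hρ : Tuple.sort (L ∘ σ) = σ⁻¹ := by
        ext i
        refine congrArg Fin.val ?_
        apply σ.injective
        apply hLinj
        have := congrFun hsorted i
        simp only [Function.comp_apply] at this
        simp only [Equiv.Perm.inv_def, Equiv.apply_symm_apply]
        exact this
      simp only [Prod.mk.injEq]
      constructor
      · exact hsorted
      · rw [hρ, inv_inv]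
    · intro K hK
      funext i
      simp
    · rintro ⟨L, σ⟩ hp
      exact (hperm L σ).symm
  rw [← step2, Finset.sum_product]
  rw [Finset.sum_congr rfl fun L _ => Finset.sum_const (G L)]
  simp only [Finset.card_univ, Fintype.card_perm, Fintype.card_fin]
  rw [← Finset.smul_sum, nsmul_eq_mul]

/-- Dual (row) orthogonality: for `λ, μ ∈ Sh(d,c)`,
`(1/n^d) ∑_I S_λ(ζ^I)·conj(S_μ(ζ^I))·|Vand(ζ^I)|² = δ_{λ,μ}`, the sum running
over all `d`-element subsets `I` of the `n`-th roots of `(-1)^{d+1}`. -/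
theorem stmt12 (c d n : ℕ) (hn : n = c + d)
    (lam mu : Fin d → Fin (c + 1)) (hlam : lam ∈ box d c) (hmu : mu ∈ box d c) :
    (1 / (n : ℂ) ^ d) *
        ∑ K ∈ Finset.univ.filter (fun K : Fin d → Fin n => StrictMono K),
          schur d (fun i => (lam i : ℕ)) (rootTup d n K) *
            (starRingEnd ℂ) (schur d (fun i => (mu i : ℕ)) (rootTup d n K)) *
            (vandSq d (rootTup d n K) : ℂ) =
      if lam = mu then 1 else 0 := by
  rcases Nat.eq_zero_or_pos d with rfl | hd
  · have hlm : lam = mu := funext fun i => i.elim0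
    rw [if_pos hlm]
    have hfilter : (Finset.univ.filter (fun K : Fin 0 → Fin n => StrictMono K)) =
        Finset.univ := by
      refine Finset.filter_true_of_mem fun K _ => ?_
      intro a b hab
      exact a.elim0
    rw [hfilter]
    have hs : ∀ K : Fin 0 → Fin n,
        schur 0 (fun i => (lam i : ℕ)) (rootTup 0 n K) *
          (starRingEnd ℂ) (schur 0 (fun i => (mu i : ℕ)) (rootTup 0 n K)) *
          (vandSq 0 (rootTup 0 n K) : ℂ) = 1 := by
      intro K
      have h1 : ∀ nu : Fin 0 → ℕ, schur 0 nu (rootTup 0 n K) = 1 := by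
        intro nu
        unfold schur
        rw [Matrix.det_fin_zero]
      have h2 : vandSq 0 (rootTup 0 n K) = 1 := by
        unfold vandSq
        simp
      rw [h1, h1, h2]
      simp
    rw [Finset.sum_congr rfl fun K _ => hs K]
    rw [Finset.sum_const, Finset.card_univ]
    simp
  · have hn0 : 0 < n := by omega
    have hw : rootTup d n = fun K => (fun k : Fin d =>
        (fun t : Fin n => Complex.exp (Real.pi * Complex.I * (d + 1) / n) *
          Complex.exp (2 * Real.pi * Complex.I / n) ^ (t : ℕ)) (K k)) := rfl
    set w : Fin n → ℂ := fun t => Complex.exp (Real.pi * Complex.I * (d + 1) / n) *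
        Complex.exp (2 * Real.pi * Complex.I / n) ^ (t : ℕ) with hwdef
    set e : Fin d → ℕ := fun i => (lam i : ℕ) + (d - 1 - (i : ℕ)) with hedef
    set f : Fin d → ℕ := fun i => (mu i : ℕ) + (d - 1 - (i : ℕ)) with hfdef
    have hlam' : ∀ i j : Fin d, i ≤ j → (lam j : ℕ) ≤ (lam i : ℕ) := by
      have hh := (Finset.mem_filter.1 hlam).2
      intro i j hij
      exact hh i j hij
    have hmu' : ∀ i j : Fin d, i ≤ j → (mu j : ℕ) ≤ (mu i : ℕ) := by
      have hh := (Finset.mem_filter.1 hmu).2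
      intro i j hij
      exact hh i j hij
    have heb : ∀ i, e i < n := by
      intro i
      have h1 : (lam i : ℕ) < c + 1 := (lam i).isLt
      have h2 := i.isLt
      simp only [hedef]
      omega
    have hfb : ∀ i, f i < n := by
      intro i
      have h1 : (mu i : ℕ) < c + 1 := (mu i).isLt
      have h2 := i.isLt
      simp only [hfdef]
      omega
    have hanti_e : ∀ a b : Fin d, a < b → e b < e a := by
      intro a b hab
      have h1 := hlam' a b (le_of_lt hab)
      have h2 : (a : ℕ) < (b : ℕ) := hab
      have h3 := b.isLt
      simp only [hedef]
      omega
    have hanti_f : ∀ a b : Fin d, a < b → f b < f a := by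
      intro a b hab
      have h1 := hmu' a b (le_of_lt hab)
      have h2 : (a : ℕ) < (b : ℕ) := hab
      have h3 := b.isLt
      simp only [hfdef]
      omega
    have hse : StrictMono (e ∘ Fin.rev) := fun a b hab =>
      hanti_e (Fin.rev b) (Fin.rev a) (Fin.rev_lt_rev.2 hab)
    have hsf : StrictMono (f ∘ Fin.rev) := fun a b hab =>
      hanti_f (Fin.rev b) (Fin.rev a) (Fin.rev_lt_rev.2 hab)
    have hchar : ∀ a b : ℕ, a < n → b < n →
        (∑ t : Fin n, w t ^ a * ((starRingEnd ℂ) (w t)) ^ b) = if a = b then (n : ℂ) else 0 := by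
      intro a b ha hb
      have hε : Complex.exp (Real.pi * Complex.I * (d + 1) / n) *
          (starRingEnd ℂ) (Complex.exp (Real.pi * Complex.I * (d + 1) / n)) = 1 := by
        rw [← Complex.exp_conj, ← Complex.exp_add]
        have hh : (Real.pi * Complex.I * (d + 1) / n : ℂ) +
            (starRingEnd ℂ) (Real.pi * Complex.I * (d + 1) / n) = 0 := by
          simp [map_div₀, Complex.conj_I, map_ofNat]
          ring
        rw [hh, Complex.exp_zero]
      exact charSum n hn0 _ hε a b ha hb
    set G : (Fin d → Fin n) → ℂ := fun K =>
      (Matrix.of fun i k : Fin d => w (K k) ^ e i).det *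
        (starRingEnd ℂ) (Matrix.of fun i k : Fin d => w (K k) ^ f i).det with hGdef
    have hperm : ∀ (K : Fin d → Fin n) (σ : Equiv.Perm (Fin d)), G (K ∘ σ) = G K := by
      intro K σ
      have ht1 : (Matrix.of fun i k : Fin d => w ((K ∘ σ) k) ^ e i) =
          (Matrix.of fun i k : Fin d => w (K k) ^ e i).submatrix id σ := rfl
      have ht2 : (Matrix.of fun i k : Fin d => w ((K ∘ σ) k) ^ f i) =
          (Matrix.of fun i k : Fin d => w (K k) ^ f i).submatrix id σ := rfl
      simp only [hGdef, ht1, ht2, Matrix.det_permute']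
      rcases Int.units_eq_one_or (Equiv.Perm.sign σ) with h | h <;>
        · rw [h]
          simp
    have hzero : ∀ K : Fin d → Fin n, ¬ Function.Injective K → G K = 0 := by
      intro K hK
      simp only [Function.Injective, not_forall] at hK
      obtain ⟨a, b, hKab, hab⟩ := hK
      have hdet : (Matrix.of fun i k : Fin d => w (K k) ^ e i).det = 0 := by
        rw [← Matrix.det_transpose]
        refine Matrix.det_zero_of_row_eq hab ?_
        funext i
        simp only [Matrix.transpose_apply, Matrix.of_apply, hKab]
      rw [hGdef]
      simp only [hdet, zero_mul]
    have hG := sum_all_eq d n G hperm hzero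
    have key := grand d n hn0 w e f hchar heb hfb hse hsf
    have hEF : (e = f) = (lam = mu) := by
      apply propext
      constructor
      · intro hef
        funext i
        have hi := congrFun hef i
        simp only [hedef, hfdef] at hi
        exact Fin.ext (by omega)
      · intro h
        rw [hedef, hfdef, h]
    have hSsum : (∑ K ∈ Finset.univ.filter (fun K : Fin d → Fin n => StrictMono K),
          schur d (fun i => (lam i : ℕ)) (rootTup d n K) *
            (starRingEnd ℂ) (schur d (fun i => (mu i : ℕ)) (rootTup d n K)) *
            (vandSq d (rootTup d n K) : ℂ)) =
        ∑ K ∈ Finset.univ.filter (fun K : Fin d → Fin n => StrictMono K), G K := by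
      refine Finset.sum_congr rfl fun K _ => ?_
      have h1 := summand_eq d (rootTup d n K) (fun i => (lam i : ℕ)) (fun i => (mu i : ℕ))
      rw [h1]
      rfl
    rw [hSsum]
    have hfac : ((Nat.factorial d : ℕ) : ℂ) ≠ 0 :=
      Nat.cast_ne_zero.2 (Nat.factorial_ne_zero d)
    have hfinal : (∑ K ∈ Finset.univ.filter (fun K : Fin d → Fin n => StrictMono K), G K) =
        if lam = mu then (n : ℂ) ^ d else 0 := by
      apply mul_left_cancel₀ hfac
      rw [← hG]
      have key' : (∑ K : Fin d → Fin n, G K) =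
          if e = f then ((Nat.factorial d : ℕ) : ℂ) * (n : ℂ) ^ d else 0 := key
      rw [key']
      simp only [hEF]
      by_cases h : lam = mu
      · rw [if_pos h, if_pos h]
      · rw [if_neg h, if_neg h, mul_zero]
    rw [hfinal]
    have hpow : ((n : ℂ)) ^ d ≠ 0 := pow_ne_zero d (Nat.cast_ne_zero.2 (by omega))
    by_cases h : lam = mu
    · rw [if_pos h, if_pos h]
      field_simp
    · rw [if_neg h, if_neg h, mul_zero]
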